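/- Let D be a division ring, V a finite-dimensional left D-vector space, R a commutative ring, and suppose V carries an R-module structure such that every r ∈ R acts as a D-linear endomorphism of V. Let S ⊆ R be a multiplicative subset and let T = {v ∈ V : ∃ s ∈ S, s • v = 0} be the S-torsion submodule. Then the canonical localization map V → S⁻¹V is surjective and its kernel equals T; in particular S⁻¹V is isomorphic as an R-module to V/T. -/

import Mathlib

/-- Antitone ℕ-sequences eventually repeat. -/
lemma exists_succ_eq_of_antitone (a : ℕ → ℕ) (ha : ∀ n, a (n + 1) ≤ a n) :
    ∃ n, a (n + 1) = a n := by
  by_contra h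
  push_neg at h
  have key : ∀ n, a n + n ≤ a 0 := by
    intro n
    induction n with
    | zero => simp
    | succ k ih =>
      have h1 : a (k + 1) < a k := lt_of_le_of_ne (ha k) (h k)
      omega
  have := key (a 0 + 1)
  omega

/-- Let `D` be a division ring, `V` a finite-dimensional left `D`-vector space, `R` a commutative
ring acting on `V` through `D`-linear endomorphisms, `S ⊆ R` a multiplicative subset and
`T = {v ∈ V : ∃ s ∈ S, s • v = 0}` the `S`-torsion submodule. Then the canonical map
`V → S⁻¹V` is surjective, its kernel is exactly `T`, and consequently `S⁻¹V ≅ V/T` as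
`R`-modules. -/
theorem stmt6 (D : Type) [DivisionRing D] (V : Type) [AddCommGroup V] [Module D V]
    [FiniteDimensional D V]
    (R : Type) [CommRing R] [Module R V] [SMulCommClass R D V]
    (S : Submonoid R) :
    Function.Surjective (LocalizedModule.mkLinearMap S V) ∧
    (∀ v : V, LocalizedModule.mkLinearMap S V v = 0 ↔ ∃ s ∈ S, s • v = 0) ∧
    Nonempty ((LocalizedModule S V) ≃ₗ[R] (V ⧸ Submodule.torsion' R V S)) := by
  have hker : ∀ v : V, LocalizedModule.mkLinearMap S V v = 0 ↔ ∃ s ∈ S, s • v = 0 := by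
    intro v
    constructor
    · intro hv
      have : LocalizedModule.mk v (1 : S) = LocalizedModule.mk (0 : V) (1 : S) := by
        simpa [LocalizedModule.mkLinearMap] using hv
      rw [LocalizedModule.mk_eq] at this
      obtain ⟨u, hu⟩ := this
      exact ⟨(u : R), u.2, by simpa [Submonoid.smul_def] using hu⟩
    · rintro ⟨s, hs, hsv⟩
      have : LocalizedModule.mk v (1 : S) = LocalizedModule.mk (0 : V) (1 : S) := by
        rw [LocalizedModule.mk_eq]
        exact ⟨⟨s, hs⟩, by simpa using hsv⟩
      simpa [LocalizedModule.mkLinearMap] using this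
  have hsurj : Function.Surjective (LocalizedModule.mkLinearMap S V) := by
    intro y
    induction y using LocalizedModule.induction_on with
    | h m s =>
      set f : V →ₗ[D] V := DistribMulAction.toLinearMap D V (s : R) with hf
      have hpow : ∀ (k : ℕ) (x : V), (f ^ k) x = ((s : R) ^ k) • x := by
        intro k
        induction k with
        | zero => intro x; simp
        | succ n ih =>
          intro x
          rw [pow_succ, pow_succ, Module.End.mul_apply, ih]
          simp [hf, mul_smul, DistribMulAction.toLinearMap, DistribSMul.toLinearMap_apply]
      obtain ⟨n, hn⟩ := exists_succ_eq_of_antitone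
        (fun n => Module.finrank D (LinearMap.range (f ^ n)))
        (fun n => by
          apply Submodule.finrank_mono
          rw [pow_succ]
          rintro _ ⟨x, rfl⟩
          exact ⟨f x, rfl⟩)
      have hle : LinearMap.range (f ^ (n + 1)) ≤ LinearMap.range (f ^ n) := by
        rw [pow_succ]
        rintro _ ⟨x, rfl⟩
        exact ⟨f x, rfl⟩
      have hrange : LinearMap.range (f ^ (n + 1)) = LinearMap.range (f ^ n) :=
        Submodule.eq_of_le_of_finrank_eq hle hn
      have hmem : (f ^ n) m ∈ LinearMap.range (f ^ (n + 1)) := by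
        rw [hrange]; exact ⟨m, rfl⟩
      obtain ⟨u, hu⟩ := hmem
      refine ⟨u, ?_⟩
      show LocalizedModule.mk u (1 : S) = LocalizedModule.mk m s
      rw [LocalizedModule.mk_eq]
      refine ⟨⟨(s : R) ^ n, pow_mem s.2 n⟩, ?_⟩
      have h1 : ((s : R) ^ (n + 1)) • u = ((s : R) ^ n) • m := by
        rw [← hpow, ← hpow, hu]
      show ((s : R) ^ n) • (s : R) • u = ((s : R) ^ n) • (1 : S) • m
      rw [one_smul, ← mul_smul, ← pow_succ, h1]
  refine ⟨hsurj, hker, ?_⟩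
  have hkereq : LinearMap.ker (LocalizedModule.mkLinearMap S V) =
      Submodule.torsion' R V S := by
    ext v
    rw [LinearMap.mem_ker, hker, Submodule.mem_torsion'_iff]
    constructor
    · rintro ⟨s, hs, h⟩; exact ⟨⟨s, hs⟩, h⟩
    · rintro ⟨s, h⟩; exact ⟨s, s.2, h⟩
  exact ⟨((hkereq ▸ LinearMap.quotKerEquivOfSurjective _ hsurj).symm)⟩
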